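/- Fix 1 ≤ i < j ≤ n and let Δ_{ij} = { x ∈ K^n : x_i = x_j, and for all pairs s<t the points x_s, x_t, σ(x_s), σ(x_t) coincide only when (s,t)=(i,j), i.e. x ∈ K^n_{*μ} }. If an element t ∈ H has a fixed point on Δ_{ij}, then t = (i j) (the transposition) or t = id. -/

import Mathlib

/-- The permutation action of `s : Perm (Fin n)` on `Fin n → K` (permuting the factors). -/
def permAct (K : Type*) {n : ℕ} (s : Equiv.Perm (Fin n)) : Equiv.Perm (Fin n → K) :=
  Equiv.arrowCongr s (Equiv.refl K)

/-- The involution `σ_A` of `K^n` applying `σ` to the coordinates in `A`. -/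
def sigmaOn {K : Type*} (σ : Equiv.Perm K) {n : ℕ} (A : Finset (Fin n)) :
    Equiv.Perm (Fin n → K) :=
  Equiv.piCongrRight fun i => if i ∈ A then σ else Equiv.refl K

/-- The covering transformation group `G`, generated by `S_n` and all the `σ_A`. -/
def bigG {K : Type*} (σ : Equiv.Perm K) (n : ℕ) : Subgroup (Equiv.Perm (Fin n → K)) :=
  Subgroup.closure (Set.range (permAct K (n := n)) ∪ Set.range (sigmaOn σ (n := n)))

/-- The subgroup `H ≤ G`, generated by `S_n` and the `σ_{ij}` applying `σ` to exactly two
coordinates. -/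
def bigH {K : Type*} (σ : Equiv.Perm K) (n : ℕ) : Subgroup (Equiv.Perm (Fin n → K)) :=
  Subgroup.closure (Set.range (permAct K (n := n)) ∪
    {g | ∃ A : Finset (Fin n), A.card = 2 ∧ g = sigmaOn σ A})

/-- Structure lemma: every element of `H` acts as `x ↦ (σ^[·∈A]) ∘ x ∘ s.symm` for some
finite set `A` and permutation `s`. -/
lemma bigH_structure {K : Type*} (σ : Equiv.Perm K) (hinv : ∀ x : K, σ (σ x) = x)
    (n : ℕ) : ∀ t ∈ bigH σ n, ∃ (A : Finset (Fin n)) (s : Equiv.Perm (Fin n)),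
      ∀ (x : Fin n → K) (k : Fin n),
        t x k = if k ∈ A then σ (x (s.symm k)) else x (s.symm k) := by
  intro t ht
  induction ht using Subgroup.closure_induction with
  | mem g hg =>
    rcases hg with ⟨s, rfl⟩ | ⟨A, _, rfl⟩
    · exact ⟨∅, s, fun x k => by simp [permAct, Equiv.arrowCongr]⟩
    · refine ⟨A, 1, fun x k => ?_⟩
      simp only [sigmaOn, Equiv.piCongrRight, Equiv.coe_fn_mk]
      by_cases h : k ∈ A <;> simp [h, Equiv.Perm.one_symm]
  | one => exact ⟨∅, 1, fun x k => by simp [Equiv.Perm.one_symm]⟩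
  | mul g h _ _ ihg ihh =>
    obtain ⟨A, s, hA⟩ := ihg
    obtain ⟨B, u, hB⟩ := ihh
    refine ⟨symmDiff A (B.image s), s * u, fun x k => ?_⟩
    have hmem : k ∈ B.image s ↔ s.symm k ∈ B := by
      constructor
      · rintro hk
        obtain ⟨b, hb, rfl⟩ := Finset.mem_image.1 hk
        simpa using hb
      · intro hk
        exact Finset.mem_image.2 ⟨s.symm k, hk, by simp⟩
    have hmul : (g * h) x k = (if k ∈ A then σ ((h x) (s.symm k)) else (h x) (s.symm k)) :=
      hA (h x) k
    rw [hmul, hB x (s.symm k)]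
    have hsu : (s * u).symm k = u.symm (s.symm k) := rfl
    rw [hsu]
    by_cases h1 : k ∈ A <;> by_cases h2 : s.symm k ∈ B <;>
      simp [h1, h2, Finset.mem_symmDiff, hmem, hinv]
  | inv g _ ih =>
    obtain ⟨A, s, hA⟩ := ih
    refine ⟨A.image s.symm, s⁻¹, fun x k => ?_⟩
    have hmem : k ∈ A.image s.symm ↔ s k ∈ A := by
      constructor
      · rintro hk
        obtain ⟨b, hb, rfl⟩ := Finset.mem_image.1 hk
        simpa using hb
      · intro hk
        exact Finset.mem_image.2 ⟨s k, hk, by simp⟩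
    have key := hA (g⁻¹ x) (s k)
    simp only [(show g (g⁻¹ x) = x from g.apply_symm_apply x), Equiv.symm_apply_apply] at key
    have hs : (s⁻¹ : Equiv.Perm (Fin n)).symm k = s k := rfl
    rw [hs]
    by_cases hk : s k ∈ A
    · rw [if_pos hk] at key
      rw [if_pos (hmem.2 hk), key, hinv]
    · rw [if_neg hk] at key
      rw [if_neg (fun h => hk (hmem.1 h)), ← key]

/-- if `t ∈ H` has a fixed point on the locus
`Δ_{ij} = { x ∈ K^n_{*μ} : x i = x j }` (where, among the points `x_s, σ(x_s)`, the only
coincidence is `x_i = x_j`), then `t` is the transposition `(i j)` or the identity. -/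
theorem stmt3 {K : Type*} (σ : Equiv.Perm K)
    (hinv : ∀ x : K, σ (σ x) = x) (hfree : ∀ x : K, σ x ≠ x)
    (n : ℕ) (hn : 2 ≤ n) (i j : Fin n) (hij : i < j) :
    ∀ t ∈ bigH σ n,
      (∃ x : Fin n → K,
        (x i = x j ∧
          ∀ s t' : Fin n, s ≠ t' → (x s = x t' ∨ x s = σ (x t')) →
            (s = i ∧ t' = j) ∨ (s = j ∧ t' = i)) ∧
        t x = x) →
      t = permAct K (Equiv.swap i j) ∨ t = 1 := by
  intro t ht ⟨x, ⟨hx1, hco⟩, hfix⟩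
  obtain ⟨A, s, hform⟩ := bigH_structure σ hinv n t ht
  have hne : i ≠ j := ne_of_lt hij
  have hfix' : ∀ k, (if k ∈ A then σ (x (s.symm k)) else x (s.symm k)) = x k := by
    intro k; rw [← hform x k, hfix]
  -- A is empty
  have hAempty : ∀ k, k ∉ A := by
    intro k hk
    have h1 : σ (x (s.symm k)) = x k := by simpa [hk] using hfix' k
    by_cases hks : s.symm k = k
    · rw [hks] at h1; exact hfree _ h1
    · have := hco k (s.symm k) (Ne.symm hks) (Or.inr h1.symm)
      have hxx : x k = x (s.symm k) := by
        rcases this with ⟨rfl, rfl⟩ | ⟨rfl, rfl⟩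
        · exact hx1
        · exact hx1.symm
      rw [hxx] at h1
      exact hfree _ h1
  have hx' : ∀ k, x (s.symm k) = x k := by
    intro k
    have := hfix' k
    rwa [if_neg (hAempty k)] at this
  -- s.symm is either id or swap i j
  have hclass : ∀ k, s.symm k = k ∨ (k = i ∧ s.symm k = j) ∨ (k = j ∧ s.symm k = i) := by
    intro k
    by_cases hks : s.symm k = k
    · exact Or.inl hks
    · rcases hco k (s.symm k) (Ne.symm hks) (Or.inl (hx' k).symm) with h | h
      · exact Or.inr (Or.inl h)
      · exact Or.inr (Or.inr h)
  by_cases hi : s.symm i = i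
  · -- identity case
    right
    have hid : ∀ k, s.symm k = k := by
      intro k
      rcases hclass k with h | ⟨rfl, h⟩ | ⟨rfl, h⟩
      · exact h
      · exact absurd (hi.symm.trans h) hne
      · -- s.symm j = i, but s.symm i = i, injectivity gives j = i
        exact absurd (s.symm.injective (h.trans hi.symm)) hne.symm
    refine Equiv.ext fun y => funext fun k => ?_
    rw [hform y k, if_neg (hAempty k), hid k]
    rfl
  · -- swap case
    left
    have hi' : s.symm i = j := by
      rcases hclass i with h | ⟨_, h⟩ | ⟨h, _⟩
      · exact absurd h hi
      · exact h
      · exact absurd h hne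
    have hj' : s.symm j = i := by
      rcases hclass j with h | ⟨h, _⟩ | ⟨_, h⟩
      · exact absurd (s.symm.injective (hi'.trans h.symm)) hne
      · exact absurd h hne.symm
      · exact h
    refine Equiv.ext fun y => funext fun k => ?_
    rw [hform y k, if_neg (hAempty k)]
    have hswap : s.symm k = Equiv.swap i j k := by
      by_cases hki : k = i
      · subst hki; rw [hi', Equiv.swap_apply_left]
      · by_cases hkj : k = j
        · subst hkj; rw [hj', Equiv.swap_apply_right]
        · rw [Equiv.swap_apply_of_ne_of_ne hki hkj]
          rcases hclass k with h | ⟨h, _⟩ | ⟨h, _⟩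
          · exact h
          · exact absurd h hki
          · exact absurd h hkj
    rw [hswap]
    simp [permAct, Equiv.arrowCongr]
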